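/- If an m × m integer matrix C has all row sums and all column sums equal to zero, then all (m−1) × (m−1) cofactors of C are equal. -/

import Mathlib

private lemma negOnePow_smul_eq {R : Type*} [CommRing R] (a b : ℕ) (x : R) :
    (-1 : R) ^ a * (Int.negOnePow ((a : ℤ) - (b : ℤ)) • x) = (-1 : R) ^ b * x := by
  have hsq : ∀ m : ℕ, (-1 : R) ^ m * (-1 : R) ^ m = 1 := fun m => by
    rw [← pow_add, ← two_mul, pow_mul]; simp
  rw [Int.negOnePow_sub, Units.smul_def, Units.val_mul, zsmul_eq_mul, Int.cast_mul,
    Int.cast_negOnePow_natCast R a, Int.cast_negOnePow_natCast R b]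
  calc (-1:R)^a * ((-1:R)^a * (-1:R)^b * x) = ((-1:R)^a * (-1:R)^a) * ((-1:R)^b * x) := by ring
  _ = (-1:R)^b * x := by rw [hsq, one_mul]

/-- If all row sums and all column sums of a square matrix `C` over a commutative
ring are zero, then all `(m−1) × (m−1)` cofactors of `C` are equal.  Here the
`(i,j)` cofactor is `(−1)^(i+j)` times the determinant of the matrix obtained by
deleting row `i` and column `j`. -/
theorem cofactors_all_equal {R : Type*} [CommRing R] (n : ℕ)
    (C : Matrix (Fin (n + 1)) (Fin (n + 1)) R)
    (hrow : ∀ i, ∑ j, C i j = 0) (hcol : ∀ j, ∑ i, C i j = 0) :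
    ∀ i j k l : Fin (n + 1),
      (-1 : R) ^ ((i : ℕ) + (j : ℕ)) *
          (C.submatrix i.succAbove j.succAbove).det =
        (-1 : R) ^ ((k : ℕ) + (l : ℕ)) *
          (C.submatrix k.succAbove l.succAbove).det := by
  intro i j k l
  have h1 : (C.submatrix i.succAbove j.succAbove).det =
      Int.negOnePow ((i : ℤ) - (k : ℤ)) • (C.submatrix k.succAbove j.succAbove).det := by
    have := Matrix.submatrix_succAbove_det_eq_negOnePow_submatrix_succAbove_det
      (C.submatrix id j.succAbove) ?_ i k
    · simpa using this
    · funext b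
      exact (Finset.sum_apply b _ _).trans (by simpa using hcol (j.succAbove b))
  have h2 : (C.submatrix k.succAbove j.succAbove).det =
      Int.negOnePow ((j : ℤ) - (l : ℤ)) • (C.submatrix k.succAbove l.succAbove).det := by
    have := Matrix.submatrix_succAbove_det_eq_negOnePow_submatrix_succAbove_det'
      (C.submatrix k.succAbove id) ?_ j l
    · simpa using this
    · intro a
      simpa using hrow (k.succAbove a)
  rw [h1, h2, smul_smul, ← Int.negOnePow_add,
    show ((i:ℤ) - (k:ℤ)) + ((j:ℤ) - (l:ℤ)) = ((((i:ℕ) + (j:ℕ) : ℕ) : ℤ)) - (((k:ℕ) + (l:ℕ) : ℕ) : ℤ) by push_cast; ring]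
  exact negOnePow_smul_eq _ _ _
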